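/- arXiv:2103.07600 — 2 statements merged into one kernel-verified Lean document; each statement's English description precedes it below -/
import Mathlib

section
/- Let N < d_x, let X, X_ε ∈ ℝ^{d_x×N} both have rank N, and let Y ∈ ℝ^{d_y×N}. Let d_1 ∈ ℕ, set p := min(d_x, d_1, d_y), and assume either rank(Y) ≤ p or the p-th largest eigenvalue of YYᵀ is strictly greater than its (p+1)-th largest eigenvalue. Let λ > 0 and let (W̃_2, W̃_1) ∈ ℝ^{d_y×d_1} × ℝ^{d_1×d_x} be a global minimizer of the clean loss ‖W_2W_1X − Y‖_F². Then every global minimizer (W_2, W_1) of the student-teacher loss ‖W_2W_1X_ε − Y‖_F² + λ‖W_1X_ε − W̃_1X‖_F² is also a global minimizer of the base loss ‖W_2W_1X_ε − Y‖_F². -/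
open Matrix

noncomputable section

/-- Squared Frobenius norm ‖M‖_F² of a real matrix. -/
def frobSq {m n : ℕ} (M : Matrix (Fin m) (Fin n) ℝ) : ℝ := ∑ i, ∑ j, (M i j) ^ 2

theorem exists_left_inv {N dx : ℕ} (M : Matrix (Fin dx) (Fin N) ℝ) (h : M.rank = N) :
    ∃ L : Matrix (Fin N) (Fin dx) ℝ, L * M = 1 := by
  have hG : (Mᵀ * M).rank = N := by rw [Matrix.rank_transpose_mul_self, h]
  set G := Mᵀ * M with hGdef
  have hsurj : Function.Surjective G.mulVec := by
    have : Function.Surjective G.mulVecLin := by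
      rw [← LinearMap.range_eq_top]
      apply Submodule.eq_top_of_finrank_eq
      rw [← Matrix.rank, hG]
      simp
    exact this
  have hunit : IsUnit G := Matrix.mulVec_surjective_iff_isUnit.mp hsurj
  refine ⟨G⁻¹ * Mᵀ, ?_⟩
  rw [Matrix.mul_assoc, ← hGdef,
    Matrix.nonsing_inv_mul _ ((Matrix.isUnit_iff_isUnit_det G).mp hunit)]

theorem frobSq_nonneg {m n : ℕ} (M : Matrix (Fin m) (Fin n) ℝ) : 0 ≤ frobSq M := by
  unfold frobSq; positivity

/-- in the undersampled regime `N < d_x`, with a teacher `(W̃₂, W̃₁)` globally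
minimizing the clean loss, every global minimizer of the student-teacher loss
`‖W₂W₁X_ε − Y‖_F² + λ‖W₁X_ε − W̃₁X‖_F²` is also a global minimizer of the base loss
`‖W₂W₁X_ε − Y‖_F²`.  Here `σ` is the decreasing list of eigenvalues of `YYᵀ` and `V` an
orthogonal matrix of corresponding eigenvectors, used to express the eigengap assumption at
`p = min(d_x,d_1,d_y)`. -/
theorem stmt5
    (N dx dy d1 : ℕ) (hN : N < dx)
    (X Xε : Matrix (Fin dx) (Fin N) ℝ) (hX : X.rank = N) (hXε : Xε.rank = N)
    (Y : Matrix (Fin dy) (Fin N) ℝ)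
    (σ : Fin dy → ℝ) (hσ : Antitone σ)
    (V : Matrix (Fin dy) (Fin dy) ℝ) (hV : Vᵀ * V = 1)
    (hAV : Y * Yᵀ * V = V * Matrix.diagonal σ)
    (hgap : Y.rank ≤ min dx (min d1 dy) ∨
      ∃ (h1 : 1 ≤ min dx (min d1 dy)) (h2 : min dx (min d1 dy) < dy),
        σ ⟨min dx (min d1 dy), h2⟩ < σ ⟨min dx (min d1 dy) - 1, by omega⟩)
    (lam : ℝ) (hlam : 0 < lam)
    (Wt2 : Matrix (Fin dy) (Fin d1) ℝ) (Wt1 : Matrix (Fin d1) (Fin dx) ℝ)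
    (hteacher : ∀ (W2' : Matrix (Fin dy) (Fin d1) ℝ) (W1' : Matrix (Fin d1) (Fin dx) ℝ),
        frobSq (Wt2 * Wt1 * X - Y) ≤ frobSq (W2' * W1' * X - Y))
    (W2 : Matrix (Fin dy) (Fin d1) ℝ) (W1 : Matrix (Fin d1) (Fin dx) ℝ)
    (hmin : ∀ (W2' : Matrix (Fin dy) (Fin d1) ℝ) (W1' : Matrix (Fin d1) (Fin dx) ℝ),
        frobSq (W2 * W1 * Xε - Y) + lam * frobSq (W1 * Xε - Wt1 * X)
          ≤ frobSq (W2' * W1' * Xε - Y) + lam * frobSq (W1' * Xε - Wt1 * X)) :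
    ∀ (W2' : Matrix (Fin dy) (Fin d1) ℝ) (W1' : Matrix (Fin d1) (Fin dx) ℝ),
      frobSq (W2 * W1 * Xε - Y) ≤ frobSq (W2' * W1' * Xε - Y) := by
  intro W2' W1'
  obtain ⟨Lε, hLε⟩ := exists_left_inv Xε hXε
  obtain ⟨LX, hLX⟩ := exists_left_inv X hX
  -- W1s plays teacher through Xε
  set W1s : Matrix (Fin d1) (Fin dx) ℝ := Wt1 * X * Lε with hW1s
  have hW1sXε : W1s * Xε = Wt1 * X := by
    rw [hW1s, Matrix.mul_assoc, hLε, Matrix.mul_one]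
  -- W1'' reproduces W1' * Xε through X
  set W1'' : Matrix (Fin d1) (Fin dx) ℝ := W1' * Xε * LX with hW1''
  have hW1''X : W1'' * X = W1' * Xε := by
    rw [hW1'', Matrix.mul_assoc, hLX, Matrix.mul_one]
  have h1 : frobSq (W2 * W1 * Xε - Y) ≤
      frobSq (W2 * W1 * Xε - Y) + lam * frobSq (W1 * Xε - Wt1 * X) := by
    nlinarith [frobSq_nonneg (W1 * Xε - Wt1 * X)]
  have h2 := hmin Wt2 W1s
  have h3 : frobSq (Wt2 * W1s * Xε - Y) + lam * frobSq (W1s * Xε - Wt1 * X)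
      = frobSq (Wt2 * Wt1 * X - Y) := by
    rw [Matrix.mul_assoc, hW1sXε, ← Matrix.mul_assoc]
    simp [frobSq]
  have h4 := hteacher W2' W1''
  have h5 : frobSq (W2' * W1'' * X - Y) = frobSq (W2' * W1' * Xε - Y) := by
    rw [Matrix.mul_assoc, hW1''X, ← Matrix.mul_assoc]
  linarith
end
end

section
/- Let x be a random vector in ℝ^d whose coordinates are independent standard Gaussian random variables (mean 0, variance 1). Then for every ε ∈ (0,1): ℙ(‖x‖₂² ≥ d/(1−ε)) ≤ exp(−ε²·d/4). -/
open MeasureTheory ProbabilityTheory Real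
open scoped ENNReal NNReal


lemma gauss_pointwise' {t : ℝ} (y : ℝ) :
    gaussianPDFReal 0 1 y * Real.exp (t * y ^ 2)
      = (Real.sqrt (2 * π))⁻¹ * Real.exp (-(1/2 - t) * y ^ 2) := by
  simp only [gaussianPDFReal, sub_zero, NNReal.coe_one, mul_one]
  rw [mul_assoc, ← Real.exp_add]
  ring_nf

lemma gauss_sq_int' {t : ℝ} (ht : t < 1/2) :
    Integrable (fun y => Real.exp (t * y ^ 2)) (gaussianReal 0 1) ∧
    ∫ y, Real.exp (t * y ^ 2) ∂(gaussianReal 0 1) = (Real.sqrt (1 - 2*t))⁻¹ := by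
  have hb : (0:ℝ) < 1/2 - t := by linarith
  have hmeas : Measurable (fun y : ℝ => (gaussianPDFReal 0 1 y).toNNReal) :=
    (measurable_gaussianPDFReal 0 1).real_toNNReal
  have hgr : gaussianReal 0 1
      = volume.withDensity (fun y => ((gaussianPDFReal 0 1 y).toNNReal : ℝ≥0∞)) := by
    rw [gaussianReal_of_var_ne_zero 0 one_ne_zero, gaussianPDF_def]
    congr 1
  have hsmul : ∀ y : ℝ, ((gaussianPDFReal 0 1 y).toNNReal : ℝ) • Real.exp (t * y ^ 2)
      = (Real.sqrt (2 * π))⁻¹ * Real.exp (-(1/2 - t) * y ^ 2) := by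
    intro y
    rw [smul_eq_mul, Real.coe_toNNReal _ (gaussianPDFReal_nonneg 0 1 y)]
    exact gauss_pointwise' y
  have hint2 : Integrable (fun y : ℝ => (Real.sqrt (2 * π))⁻¹ * Real.exp (-(1/2 - t) * y ^ 2)) :=
    (integrable_exp_neg_mul_sq hb).const_mul _
  constructor
  · rw [hgr, integrable_withDensity_iff_integrable_smul hmeas]
    refine hint2.congr ?_
    exact Filter.Eventually.of_forall fun y => ((hsmul y).symm : _)
  · rw [hgr, integral_withDensity_eq_integral_smul hmeas]
    calc ∫ y, ((gaussianPDFReal 0 1 y).toNNReal : ℝ≥0) • Real.exp (t * y ^ 2)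
        = ∫ y, (Real.sqrt (2 * π))⁻¹ * Real.exp (-(1/2 - t) * y ^ 2) := by
          refine integral_congr_ae (Filter.Eventually.of_forall fun y => ?_)
          exact hsmul y
      _ = (Real.sqrt (2 * π))⁻¹ * Real.sqrt (π / (1/2 - t)) := by
          rw [MeasureTheory.integral_const_mul, integral_gaussian]
      _ = (Real.sqrt (1 - 2*t))⁻¹ := by
          have h2 : (0:ℝ) < 1 - 2*t := by linarith
          have he : π / (1/2 - t) = (2*π) / (1-2*t) := by
            rw [div_eq_div_iff hb.ne' h2.ne']; ring
          rw [he, Real.sqrt_div (by positivity), div_eq_mul_inv, ← mul_assoc,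
            inv_mul_cancel₀ (by positivity : Real.sqrt (2*π) ≠ 0), one_mul]

/-- a.e. modification preserves `iIndepFun`. -/
lemma iIndepFun_ae_eq' {Ω ι : Type*} [MeasurableSpace Ω] {P : Measure Ω}
    {f g : ι → Ω → ℝ}
    (hf : iIndepFun f P) (h : ∀ i, f i =ᵐ[P] g i) :
    iIndepFun g P := by
  rw [iIndepFun_iff_measure_inter_preimage_eq_mul] at hf ⊢
  intro S sets hsets
  have hae : ∀ᵐ ω ∂P, ∀ i ∈ S, f i ω = g i ω :=
    (MeasureTheory.ae_ball_iff S.countable_toSet).2 fun i _ => h i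
  have h1 : P (⋂ i ∈ S, g i ⁻¹' sets i) = P (⋂ i ∈ S, f i ⁻¹' sets i) := by
    refine measure_congr ?_
    filter_upwards [hae] with ω hω
    show (ω ∈ ⋂ i ∈ S, g i ⁻¹' sets i) = (ω ∈ ⋂ i ∈ S, f i ⁻¹' sets i)
    simp only [Set.mem_iInter, Set.mem_preimage, eq_iff_iff]
    exact forall₂_congr fun i hi => by rw [hω i hi]
  rw [h1, hf S hsets]
  refine Finset.prod_congr rfl fun i _ => ?_
  refine measure_congr ?_
  filter_upwards [h i] with ω hω
  show (f i ω ∈ sets i) = (g i ω ∈ sets i)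
  rw [hω]



/-- for a standard Gaussian vector `x` in ℝ^d (independent `N(0,1)`
coordinates) and any `ε ∈ (0,1)`:
`ℙ(‖x‖₂² ≥ d/(1−ε)) ≤ exp(−ε² d / 4)`. -/
theorem stmt13
    {Ω : Type*} [MeasurableSpace Ω] (P : Measure Ω) [IsProbabilityMeasure P]
    (d : ℕ) (x : Ω → Fin d → ℝ)
    (hind : iIndepFun (fun i ω => x ω i) P)
    (hgauss : ∀ i, Measure.map (fun ω => x ω i) P = gaussianReal 0 1)
    (ε : ℝ) (hε0 : 0 < ε) (hε1 : ε < 1) :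
    P {ω | (d : ℝ) / (1 - ε) ≤ ∑ i, (x ω i) ^ 2}
      ≤ ENNReal.ofReal (Real.exp (-ε ^ 2 * d / 4)) := by
  classical
  set t : ℝ := ε / 2 with ht_def
  have ht0 : 0 < t := by positivity
  have ht2 : t < 1/2 := by rw [ht_def]; linarith
  have h1ε : (0:ℝ) < 1 - ε := by linarith
  -- measurable modifications of the coordinates
  have hXae : ∀ i, AEMeasurable (fun ω => x ω i) P := fun i =>
    aemeasurable_of_map_neZero (by rw [hgauss i]; infer_instance)
  set y : Fin d → Ω → ℝ := fun i => (hXae i).mk _ with hy_def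
  have hymeas : ∀ i, Measurable (y i) := fun i => (hXae i).measurable_mk
  have hyae : ∀ i, (fun ω => x ω i) =ᵐ[P] y i := fun i => (hXae i).ae_eq_mk
  have hmap : ∀ i, Measure.map (y i) P = gaussianReal 0 1 := fun i => by
    rw [← Measure.map_congr (hyae i), hgauss i]
  have hind' : iIndepFun y P := iIndepFun_ae_eq' hind hyae
  -- squares
  set Z : Fin d → Ω → ℝ := fun i ω => (y i ω) ^ 2 with hZ_def
  have hZind : iIndepFun Z P :=
    hind'.comp (fun _ z => z ^ 2) (fun _ => measurable_id.pow_const 2)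
  have hZmeas : ∀ i, Measurable (Z i) := fun i => (hymeas i).pow_const 2
  have hZint : ∀ i, Integrable (fun ω => Real.exp (t * Z i ω)) P := by
    intro i
    have := (gauss_sq_int' ht2).1
    rw [← hmap i] at this
    rw [integrable_map_measure
      (by exact (measurable_exp.comp ((measurable_id.pow_const 2).const_mul t)).aestronglyMeasurable)
      (hymeas i).aemeasurable] at this
    exact this
  have hZmgf : ∀ i, mgf (Z i) P t = (Real.sqrt (1 - ε))⁻¹ := by
    intro i
    have h2 : (1:ℝ) - 2 * t = 1 - ε := by rw [ht_def]; ring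
    rw [mgf, ← h2, ← (gauss_sq_int' ht2).2, ← hmap i,
      integral_map (hymeas i).aemeasurable
        (by exact (measurable_exp.comp ((measurable_id.pow_const 2).const_mul t)).aestronglyMeasurable)]
  have hsum_int : Integrable (fun ω => Real.exp (t * (∑ i, Z i) ω)) P :=
    hZind.integrable_exp_mul_sum hZmeas (fun i _ => hZint i)
  set a : ℝ := (d : ℝ) / (1 - ε) with ha_def
  have hchern := measure_ge_le_exp_mul_mgf (X := ∑ i, Z i) (μ := P) a ht0.le hsum_int
  have hmgf_sum : mgf (∑ i, Z i) P t = ((Real.sqrt (1 - ε))⁻¹) ^ d := by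
    rw [hZind.mgf_sum hZmeas]
    simp [hZmgf]
  -- identify the event up to a.e.
  have hset : P {ω | a ≤ ∑ i, (x ω i) ^ 2} = P {ω | a ≤ (∑ i, Z i) ω} := by
    refine measure_congr ?_
    have hae : ∀ᵐ ω ∂P, ∀ i, x ω i = y i ω :=
      (MeasureTheory.ae_all_iff).2 fun i => hyae i
    filter_upwards [hae] with ω hω
    simp only [eq_iff_iff, Set.mem_setOf_eq, hZ_def, Finset.sum_apply]
    constructor
    · intro hh; refine le_trans hh (le_of_eq ?_); exact Finset.sum_congr rfl fun i _ => by rw [hω i]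
    · intro hh; refine le_trans hh (le_of_eq ?_); exact Finset.sum_congr rfl fun i _ => by rw [hω i]
  -- log bound
  have hlog : -Real.log (1 - ε) ≤ ε / (1 - ε) - ε ^ 2 / 2 := by
    have habs := Real.abs_log_sub_add_sum_range_le (by rw [abs_of_pos hε0]; exact hε1) 2
    rw [abs_of_pos hε0] at habs
    have hsum : (∑ i ∈ Finset.range 2, ε ^ (i + 1) / (i + 1)) = ε + ε ^ 2 / 2 := by
      simp [Finset.sum_range_succ]
      norm_num
    rw [hsum] at habs
    have h3 : ε + ε ^ 2 / 2 + Real.log (1 - ε) ≥ -(ε ^ 3 / (1 - ε)) := by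
      have := abs_le.1 habs
      linarith [this.1]
    have hA : ε / (1 - ε) = ε + ε ^ 2 + ε ^ 3 / (1 - ε) := by
      field_simp
      ring
    linarith
  -- final numeric bound
  have hnum : Real.exp (-t * a) * ((Real.sqrt (1 - ε))⁻¹) ^ d
      ≤ Real.exp (-ε ^ 2 * d / 4) := by
    have hs : (Real.sqrt (1 - ε))⁻¹ = Real.exp (-(Real.log (1 - ε) / 2)) := by
      rw [Real.exp_neg, ← Real.log_sqrt h1ε.le, Real.exp_log (Real.sqrt_pos.2 h1ε)]
    rw [hs, ← Real.exp_nat_mul, ← Real.exp_add, Real.exp_le_exp]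
    have key : -t / (1 - ε) - Real.log (1 - ε) / 2 ≤ -ε ^ 2 / 4 := by
      rw [ht_def]
      have : -(ε / 2) / (1 - ε) = (- (ε / (1 - ε))) / 2 := by ring
      rw [this]
      linarith
    have hd0 : (0:ℝ) ≤ (d:ℝ) := Nat.cast_nonneg d
    have := mul_le_mul_of_nonneg_left key hd0
    have hrw : -t * a + (d:ℝ) * -(Real.log (1 - ε) / 2)
        = (d:ℝ) * (-t / (1 - ε) - Real.log (1 - ε) / 2) := by
      rw [ha_def]; field_simp; ring
    rw [hrw]
    calc (d:ℝ) * (-t / (1 - ε) - Real.log (1 - ε) / 2)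
        ≤ (d:ℝ) * (-ε ^ 2 / 4) := this
      _ = -ε ^ 2 * d / 4 := by ring
  -- put it together
  calc P {ω | a ≤ ∑ i, (x ω i) ^ 2}
      = ENNReal.ofReal ((P {ω | a ≤ (∑ i, Z i) ω}).toReal) := by
        rw [hset, ENNReal.ofReal_toReal (measure_ne_top _ _)]
    _ ≤ ENNReal.ofReal (Real.exp (-ε ^ 2 * d / 4)) := by
        refine ENNReal.ofReal_le_ofReal (le_trans hchern ?_)
        rw [hmgf_sum]
        exact hnum
end
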